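/- Let u : ℝ_{>0} → ℝ be locally Lipschitz with limsup_{x→∞} u(x)/x < c₀ where c₀ > 0, and c₁ > 0. Define Mu(x) := sup_{i>0} {u(x+i) - c₀ i - c₁}. Then limsup_{x→∞} (Mu)(x)/x < c₀. -/
import Mathlib

theorem stmt_5 (c₀ c₁ : ℝ) (hc₀ : 0 < c₀) (hc₁ : 0 < c₁) (u : ℝ → ℝ)
    (hloclip : ∀ x > (0:ℝ), ∃ K : NNReal, ∃ ε > (0:ℝ),
      LipschitzOnWith K u (Metric.ball x ε ∩ Set.Ioi 0))
    (hgrowth : ∃ ε > (0:ℝ), ∃ xbar : ℝ, ∀ x ≥ xbar, 0 < x → u x / x ≤ c₀ - ε) :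
    ∃ ε > (0:ℝ), ∃ xbar : ℝ, ∀ x ≥ xbar, 0 < x →
      sSup {y : ℝ | ∃ i > (0:ℝ), y = u (x + i) - c₀ * i - c₁} / x ≤ c₀ - ε := by
  obtain ⟨ε, hε, xbar, hx⟩ := hgrowth
  refine ⟨ε, hε, xbar, fun x hxbar hx0 => ?_⟩
  rw [div_le_iff₀ hx0]
  apply csSup_le
  · exact ⟨u (x + 1) - c₀ * 1 - c₁, 1, one_pos, rfl⟩
  · rintro y ⟨i, hi, rfl⟩
    have h1 : 0 < x + i := by linarith
    have h2 := hx (x + i) (by linarith) h1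
    rw [div_le_iff₀ h1] at h2
    nlinarith
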